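/- For every belt assignment b of an instance of Belt Makespan, the makespan M(b) satisfies M(b) ≥ max{ Σ_{A∈𝒯} d_A , (r*−1)·N + Σ_{A∈𝒯} σ_A } + N − 1, where r* := max_{A∈𝒯} ⌈d_A / c_A⌉ and σ_A := max{0, d_A − (r*−1)·c_A}. In particular this bound holds for the optimal makespan. -/

import Mathlib

open Finset

variable {α : Type*}

/-- A mould of type `A` is injected in step `i`: `b i = A` and either `i < N`
or the slot `N` steps earlier did not carry `A`. -/
def Injected (N : ℕ) (b : ℕ → Option α) (A : α) (i : ℕ) : Prop :=
  b i = some A ∧ (i < N ∨ b (i - N) ≠ some A)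

/-- The number of moulds of type `A` used by the belt function `b`. -/
noncomputable def MouldsUsed (N : ℕ) (b : ℕ → Option α) (A : α) : ℕ :=
  {i | Injected N b A i}.ncard

/-- A belt assignment: (i) each type `A` occurs exactly `d A` times, (ii) an
injected mould stays on the belt (period `N`) until the demand of its type is
met, (iii) at most `c A` moulds of type `A` are used. -/
def IsBeltAssignment (N : ℕ) (d c : α → ℕ) (b : ℕ → Option α) : Prop :=
  (∀ A : α, {i | b i = some A}.Finite) ∧
  (∀ A : α, {i | b i = some A}.ncard = d A) ∧
  (∀ (i : ℕ) (A : α), b i = some A →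
      b (i + N) = some A ∨ {j | b j = some A ∧ j < i + N}.ncard = d A) ∧
  (∀ A : α, MouldsUsed N b A ≤ c A)

/-- The makespan of `b`: the smallest `s` such that for every type `A` all of
its demand appears among steps `0, …, s - N - 1`. -/
noncomputable def Makespan (N : ℕ) (d : α → ℕ) (b : ℕ → Option α) : ℕ :=
  sInf {s | ∀ A : α, {j | b j = some A ∧ j < s - N}.ncard = d A}

/-- Property (E): every injection happens before every empty slot. -/
def PropE (N : ℕ) (b : ℕ → Option α) : Prop :=
  ∀ (A : α) (i e : ℕ), Injected N b A i → b e = none → i < e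

/-- Property (F): if there is an empty slot `e` and strictly fewer than `c A`
moulds of type `A` are used, then `A` does not occur at any step `i ≥ e`. -/
def PropF (N : ℕ) (c : α → ℕ) (b : ℕ → Option α) : Prop :=
  ∀ (e : ℕ) (A : α), b e = none → MouldsUsed N b A < c A → ∀ i, e ≤ i → b i ≠ some A

/-- The maximal number of rounds `r* = max_A ⌈d A / c A⌉` needed by some type. -/
def rstar [Fintype α] (d c : α → ℕ) : ℕ :=
  Finset.univ.sup fun A => (d A + c A - 1) / c A

open scoped Classical in
lemma exists_inj_aux (N : ℕ) (hN : 0 < N) (b : ℕ → Option α) (A : α) :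
    ∀ j, b j = some A → ∃ i, Injected N b A i ∧ ∃ q, j = i + N * q := by
  intro j
  induction j using Nat.strong_induction_on with
  | _ j ih =>
    intro hj
    by_cases h : Injected N b A j
    · exact ⟨j, h, 0, by simp⟩
    · have h' : ¬ (j < N ∨ b (j - N) ≠ some A) := fun hh => h ⟨hj, hh⟩
      push_neg at h'
      obtain ⟨hjN, hprev⟩ := h'
      obtain ⟨i, hi, q, hq⟩ := ih (j - N) (by omega) hprev
      refine ⟨i, hi, q + 1, ?_⟩
      have hmul : N * (q + 1) = N * q + N := by ring
      omega

open scoped Classical in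
lemma card_occ_le (N : ℕ) (hN : 0 < N) (b : ℕ → Option α) (A : α)
    (hfin : {i | b i = some A}.Finite) (r : ℕ) :
    ((Finset.range (r * N)).filter fun j => b j = some A).card
      ≤ MouldsUsed N b A * r := by
  classical
  have hIfin : {i | Injected N b A i}.Finite := hfin.subset fun i hi => hi.1
  have hM : MouldsUsed N b A = hIfin.toFinset.card := by
    rw [MouldsUsed, Set.ncard_eq_toFinset_card _ hIfin]
  have key : ((Finset.range (r * N)).filter fun j => b j = some A).card
      ≤ (hIfin.toFinset ×ˢ Finset.range r).card := by
    apply Finset.card_le_card_of_injOn (fun j =>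
      if h : ∃ i, Injected N b A i ∧ ∃ q, j = i + N * q
      then (h.choose, (j - h.choose) / N) else (0, 0))
    · intro j hj
      simp only [Finset.mem_coe, Finset.mem_filter, Finset.mem_range] at hj
      obtain ⟨hjr, hjA⟩ := hj
      have hex := exists_inj_aux N hN b A j hjA
      simp only [dif_pos hex, Finset.mem_coe]
      obtain ⟨hi, q, hq⟩ := hex.choose_spec
      have hsub : j - hex.choose = N * q := by omega
      rw [hsub, Nat.mul_div_cancel_left _ hN, Finset.mem_product]
      constructor
      · simpa [Set.Finite.mem_toFinset] using hi
      · simp only [Finset.mem_range]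
        have h2 : N * q < r * N := by omega
        rw [mul_comm r N] at h2
        exact Nat.lt_of_mul_lt_mul_left h2
    · intro j1 h1 j2 h2 heq
      simp only [Finset.coe_filter, Set.mem_setOf_eq, Finset.mem_range] at h1 h2
      have hex1 := exists_inj_aux N hN b A j1 h1.2
      have hex2 := exists_inj_aux N hN b A j2 h2.2
      simp only [dif_pos hex1, dif_pos hex2, Prod.mk.injEq] at heq
      obtain ⟨hi1, q1, hq1⟩ := hex1.choose_spec
      obtain ⟨hi2, q2, hq2⟩ := hex2.choose_spec
      have hs1 : j1 - hex1.choose = N * q1 := by omega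
      have hs2 : j2 - hex2.choose = N * q2 := by omega
      rw [hs1, hs2, Nat.mul_div_cancel_left _ hN, Nat.mul_div_cancel_left _ hN] at heq
      have hqe : N * q1 = N * q2 := by rw [heq.2]
      omega
  rw [Finset.card_product, Finset.card_range] at key
  rw [hM]
  exact key

open scoped Classical in
lemma sum_card_filter_le [Fintype α] (b : ℕ → Option α) (s : Finset ℕ) :
    ∑ A : α, (s.filter fun j => b j = some A).card ≤ s.card := by
  classical
  rw [← Finset.card_biUnion]
  · exact Finset.card_le_card (Finset.biUnion_subset.2 fun A _ => Finset.filter_subset _ s)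
  · intro A _ B _ hAB
    simp only [Finset.disjoint_left, Finset.mem_filter]
    rintro i ⟨-, hA⟩ ⟨-, hB⟩
    rw [hA] at hB
    exact hAB (Option.some_inj.1 hB)

open scoped Classical in
lemma cnt_eq (b : ℕ → Option α) (t : ℕ) (A : α) :
    {j | b j = some A ∧ j < t}.ncard
      = ((Finset.range t).filter fun j => b j = some A).card := by
  classical
  rw [← Set.ncard_coe_finset]
  congr 1
  ext j
  simp only [Set.mem_setOf_eq, Finset.coe_filter, Finset.mem_range]
  tauto

/-- **Lemma 2 (lower bound).** For every belt assignment `b`,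
`M(b) ≥ max{Σ_A d_A, (r*-1)·N + Σ_A σ_A} + N - 1` where
`σ_A = max{0, d_A - (r*-1)·c_A}`. In particular the optimal makespan obeys
this bound. -/
theorem statement0 [Fintype α] [Nonempty α] (N : ℕ) (hN : 0 < N)
    (d c : α → ℕ) (hd : ∀ A, 0 < d A) (hc : ∀ A, 0 < c A)
    (b : ℕ → Option α) (hb : IsBeltAssignment N d c b) :
    max (∑ A : α, d A)
        ((rstar d c - 1) * N + ∑ A : α, (d A - (rstar d c - 1) * c A)) + N - 1
      ≤ Makespan N d b := by
  classical
  obtain ⟨hfin, hcount, hpers, hcap⟩ := hb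
  set r := rstar d c with hr
  -- the defining set of the makespan is nonempty
  have hUfin : (⋃ A : α, {i | b i = some A}).Finite := Set.finite_iUnion fun A => hfin A
  obtain ⟨M, hM⟩ := hUfin.bddAbove
  have hne : {s | ∀ A : α, {j | b j = some A ∧ j < s - N}.ncard = d A}.Nonempty := by
    refine ⟨M + 1 + N, fun A => ?_⟩
    have hset : {j | b j = some A ∧ j < M + 1 + N - N} = {j | b j = some A} := by
      ext j
      simp only [Set.mem_setOf_eq, and_iff_left_iff_imp]
      intro hj
      have : j ≤ M := hM (Set.mem_iUnion.2 ⟨A, hj⟩)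
      omega
    rw [hset]
    exact hcount A
  have hsmem : ∀ A : α, {j | b j = some A ∧ j < Makespan N d b - N}.ncard = d A := by
    rw [Makespan]
    exact Nat.sInf_mem hne
  set s := Makespan N d b with hsdef
  have hcnt : ∀ A, ((Finset.range (s - N)).filter fun j => b j = some A).card = d A := by
    intro A
    rw [← cnt_eq]
    exact hsmem A
  set T := s - N with hT
  have hT0 : 0 < T := by
    rcases Nat.eq_zero_or_pos T with h0 | h
    · exfalso
      have hA := hcnt (Classical.arbitrary α)
      rw [h0] at hA
      simp only [Finset.range_zero, Finset.filter_empty, Finset.card_empty] at hA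
      have := hd (Classical.arbitrary α)
      omega
    · exact h
  have hsTN : s = T + N := by omega
  -- first bound : total demand
  have hb1 : ∑ A : α, d A ≤ T := by
    calc ∑ A : α, d A
        = ∑ A : α, ((Finset.range T).filter fun j => b j = some A).card :=
          Finset.sum_congr rfl fun A _ => (hcnt A).symm
      _ ≤ (Finset.range T).card := sum_card_filter_le b _
      _ = T := Finset.card_range T
  -- per-type bound within the first (r-1)*N slots
  set R := (r - 1) * N with hR
  have hAR : ∀ A, ((Finset.range R).filter fun j => b j = some A).card ≤ (r - 1) * c A := by
    intro A
    calc ((Finset.range R).filter fun j => b j = some A).card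
        ≤ MouldsUsed N b A * (r - 1) := card_occ_le N hN b A (hfin A) (r - 1)
      _ ≤ c A * (r - 1) := Nat.mul_le_mul_right _ (hcap A)
      _ = (r - 1) * c A := mul_comm _ _
  -- a type attaining r*
  obtain ⟨A0, -, hA0⟩ := Finset.exists_mem_eq_sup Finset.univ Finset.univ_nonempty
    (fun A => (d A + c A - 1) / c A)
  have hrA0 : r = (d A0 + c A0 - 1) / c A0 := by
    rw [hr]
    unfold rstar
    exact hA0
  have hrc : (r - 1) * c A0 < d A0 := by
    have hcc := hc A0
    have hdd := hd A0
    have h1 : (d A0 + c A0 - 1) / c A0 * c A0 ≤ d A0 + c A0 - 1 := Nat.div_mul_le_self _ _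
    rw [hrA0, Nat.sub_mul, one_mul]
    omega
  have hRT : R ≤ T := by
    by_contra h
    push_neg at h
    have hmono : ((Finset.range T).filter fun j => b j = some A0).card
        ≤ ((Finset.range R).filter fun j => b j = some A0).card :=
      Finset.card_le_card (Finset.filter_subset_filter _ (Finset.range_subset_range.2 (by omega)))
    have h2 := hAR A0
    have h3 := hcnt A0
    omega
  -- second bound
  have hb2 : R + ∑ A : α, (d A - (r - 1) * c A) ≤ T := by
    have hsub : Finset.range R ⊆ Finset.range T := Finset.range_subset_range.2 hRT
    have hsplit : ∀ A, d A - (r - 1) * c A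
        ≤ ((Finset.range T \ Finset.range R).filter fun j => b j = some A).card := by
      intro A
      have hun : Finset.range T = Finset.range R ∪ (Finset.range T \ Finset.range R) :=
        (Finset.union_sdiff_of_subset hsub).symm
      have h2 : ((Finset.range T).filter fun j => b j = some A).card
          ≤ ((Finset.range R).filter fun j => b j = some A).card
            + ((Finset.range T \ Finset.range R).filter fun j => b j = some A).card := by
        conv_lhs => rw [hun]
        rw [Finset.filter_union]
        exact Finset.card_union_le _ _
      have h3 := hAR A
      have h4 := hcnt A
      omega
    calc R + ∑ A : α, (d A - (r - 1) * c A)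
        ≤ R + ∑ A : α, ((Finset.range T \ Finset.range R).filter fun j => b j = some A).card :=
          Nat.add_le_add_left (Finset.sum_le_sum fun A _ => hsplit A) R
      _ ≤ R + (Finset.range T \ Finset.range R).card :=
          Nat.add_le_add_left (sum_card_filter_le b _) R
      _ ≤ T := by
          rw [Finset.card_sdiff_of_subset hsub, Finset.card_range, Finset.card_range]
          omega
  have hmax : max (∑ A : α, d A) (R + ∑ A : α, (d A - (r - 1) * c A)) ≤ T := max_le hb1 hb2
  omega
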